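/- If X is a nonnormal n×n complex matrix, then the positive semidefinite block matrix [[|X*|, X],[X*, |X|]] satisfies ‖[[|X*|, X],[X*, |X|]]‖₂ > ‖ |X*| + |X| ‖₂ in the Frobenius norm. Consequently, the Frobenius-norm inequality ‖[[A,X],[X*,B]]‖₂ ≤ ‖A+B‖₂ for all positive semidefinite completions holds if and only if X is normal. -/

import Mathlib

open scoped Matrix ComplexOrder

noncomputable section

/-- The numerical range of a matrix. -/
def numRange {m : Type*} [Fintype m] (X : Matrix m m ℂ) : Set ℂ :=
  {z | ∃ v : m → ℂ, star v ⬝ᵥ v = 1 ∧ z = star v ⬝ᵥ X.mulVec v}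

/-- The inradius of a subset of the plane: the radius of the largest disc it contains. -/
def inRad (S : Set ℂ) : ℝ := sSup {r : ℝ | ∃ c : ℂ, Metric.closedBall c r ⊆ S}

/-- The indiameter: the diameter of the largest disc contained in the set. -/
def inDiam (S : Set ℂ) : ℝ := 2 * inRad S

/-- The numerical range of the compression of `X` to the subspace `S`. -/
def nrOn {m : Type*} [Fintype m] (X : Matrix m m ℂ) (S : Submodule ℂ (m → ℂ)) : Set ℂ :=
  {z | ∃ v ∈ S, star v ⬝ᵥ v = 1 ∧ z = star v ⬝ᵥ X.mulVec v}

/-- The elliptical width `δ₂(X)`: the supremum of the indiameters of the numerical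
ranges of compressions of `X` to two-dimensional subspaces. -/
def ellWidth {m : Type*} [Fintype m] (X : Matrix m m ℂ) : ℝ :=
  sSup {d | ∃ S : Submodule ℂ (m → ℂ), Module.finrank ℂ S = 2 ∧ d = inDiam (nrOn X S)}

/-- The operator (spectral) norm of a matrix. -/
def opNorm {m : Type*} [Fintype m] [DecidableEq m] (M : Matrix m m ℂ) : ℝ :=
  ‖Matrix.toEuclideanCLM (𝕜 := ℂ) M‖

/-- The Frobenius (Hilbert–Schmidt) norm of a matrix. -/
def frobNorm {m : Type*} [Fintype m] (M : Matrix m m ℂ) : ℝ :=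
  Real.sqrt ((Matrix.trace (Mᴴ * M)).re)

/-- Eigenvalues of a Hermitian matrix in decreasing order (junk value `0` otherwise):
`eigDesc M k` is the `(k+1)`-th largest eigenvalue of `M`. -/
def eigDesc {m : ℕ} (M : Matrix (Fin m) (Fin m) ℂ) (k : Fin m) : ℝ :=
  if h : M.IsHermitian then (h.eigenvalues ∘ Tuple.sort h.eigenvalues) k.rev else 0

/-- The absolute value `|X| = (XᴴX)^(1/2)` of a matrix. -/
def matAbs {m : Type*} [Fintype m] [DecidableEq m] (X : Matrix m m ℂ) : Matrix m m ℂ :=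
  (Matrix.posSemidef_conjTranspose_mul_self X).1.eigenvectorUnitary.1 *
    Matrix.diagonal ((RCLike.ofReal : ℝ → ℂ) ∘ (Real.sqrt ·) ∘
      (Matrix.posSemidef_conjTranspose_mul_self X).1.eigenvalues) *
    (star (Matrix.posSemidef_conjTranspose_mul_self X).1.eigenvectorUnitary : Matrix m m ℂ)

/-- The `2n × 2n` block matrix `[[A, X],[Xᴴ, B]]`, reindexed by `Fin (n+n)`. -/
def blockR {n : ℕ} (A X B : Matrix (Fin n) (Fin n) ℂ) :
    Matrix (Fin (n + n)) (Fin (n + n)) ℂ :=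
  (Matrix.fromBlocks A X Xᴴ B).submatrix finSumFinEquiv.symm finSumFinEquiv.symm

/-- The operator norm distance from `X` to the scalar matrices. -/
def distScalar {m : Type*} [Fintype m] [DecidableEq m] (X : Matrix m m ℂ) : ℝ :=
  ⨅ a : ℂ, opNorm (X - a • 1)

/-- Apply a real function to a Hermitian matrix by the functional calculus
(junk value `0` if the matrix is not Hermitian). -/
def hermApply {m : Type*} [Fintype m] [DecidableEq m] (f : ℝ → ℝ) (M : Matrix m m ℂ) :
    Matrix m m ℂ :=
  if h : M.IsHermitian then h.cfc f else 0

end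

namespace Matrix.PosSemidef
variable {ι : Type*} [Fintype ι] [DecidableEq ι] {M : Matrix ι ι ℂ}
noncomputable def sqrt (hM : M.PosSemidef) : Matrix ι ι ℂ :=
  hM.1.eigenvectorUnitary.1 *
    Matrix.diagonal ((RCLike.ofReal : ℝ → ℂ) ∘ (Real.sqrt ·) ∘ hM.1.eigenvalues) *
    (star hM.1.eigenvectorUnitary : Matrix ι ι ℂ)
open scoped MatrixOrder in
lemma sqrt_eq_cfc (hM : M.PosSemidef) : hM.sqrt = CFC.sqrt M := by
  rw [CFC.sqrt_eq_real_sqrt M hM.nonneg, cfcₙ_eq_cfc, hM.1.cfc_eq, IsHermitian.cfc,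
    Unitary.conjStarAlgAut_apply]
  rfl
open scoped MatrixOrder in
lemma posSemidef_sqrt (hM : M.PosSemidef) : hM.sqrt.PosSemidef := by
  rw [sqrt_eq_cfc]; exact Matrix.nonneg_iff_posSemidef.mp (CFC.sqrt_nonneg M)
open scoped MatrixOrder in
lemma sqrt_mul_self (hM : M.PosSemidef) : hM.sqrt * hM.sqrt = M := by
  rw [sqrt_eq_cfc]; exact CFC.sqrt_mul_sqrt_self M hM.nonneg
open scoped MatrixOrder in
lemma eq_sqrt_of_sq_eq {K : Matrix ι ι ℂ} (hK : K.PosSemidef) (hM : M.PosSemidef)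
    (h : K ^ 2 = M) : K = hM.sqrt := by
  rw [sqrt_eq_cfc]; exact (CFC.sqrt_unique (by rw [← pow_two]; exact h) hK.nonneg).symm
end Matrix.PosSemidef

lemma matAbs_eq_sqrt {m : Type*} [Fintype m] [DecidableEq m] (X : Matrix m m ℂ) :
    matAbs X = (Matrix.posSemidef_conjTranspose_mul_self X).sqrt := rfl

namespace Stmt12Aux
open Polynomial Matrix

variable {m k : Type*} [Fintype m] [Fintype k]

/-- Entrywise squared Frobenius norm. -/
def fro (M : Matrix m k ℂ) : ℝ := ∑ i, ∑ j, Complex.normSq (M i j)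

/-- Real part of the Frobenius inner product. -/
def iprod (A B : Matrix m k ℂ) : ℝ := ∑ i, ∑ j, ((starRingEnd ℂ) (A i j) * B i j).re

lemma fro_nonneg (M : Matrix m k ℂ) : 0 ≤ fro M :=
  Finset.sum_nonneg fun _ _ => Finset.sum_nonneg fun _ _ => Complex.normSq_nonneg _

lemma fro_eq_zero {M : Matrix m k ℂ} (h : fro M = 0) : M = 0 := by
  have h1 := (Finset.sum_eq_zero_iff_of_nonneg
    (fun i _ => Finset.sum_nonneg fun j _ => Complex.normSq_nonneg (M i j))).mp h
  ext i j
  have h2 := (Finset.sum_eq_zero_iff_of_nonneg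
    (fun j _ => Complex.normSq_nonneg (M i j))).mp (h1 i (Finset.mem_univ i)) j (Finset.mem_univ j)
  simpa using Complex.normSq_eq_zero.mp h2

lemma fro_eq_trace (M : Matrix m k ℂ) : (Matrix.trace (Mᴴ * M)).re = fro M := by
  rw [Matrix.trace, Complex.re_sum, fro, Finset.sum_comm]
  refine Finset.sum_congr rfl fun j _ => ?_
  rw [Matrix.diag_apply, Matrix.mul_apply, Complex.re_sum]
  refine Finset.sum_congr rfl fun i _ => ?_
  rw [Matrix.conjTranspose_apply, Complex.star_def, ← Complex.normSq_eq_conj_mul_self,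
    Complex.ofReal_re]

lemma iprod_eq_trace (A B : Matrix m k ℂ) : (Matrix.trace (Aᴴ * B)).re = iprod A B := by
  rw [Matrix.trace, Complex.re_sum, iprod, Finset.sum_comm]
  refine Finset.sum_congr rfl fun j _ => ?_
  rw [Matrix.diag_apply, Matrix.mul_apply, Complex.re_sum]
  exact Finset.sum_congr rfl fun i _ => by rw [Matrix.conjTranspose_apply, Complex.star_def]

lemma normSq_add' (a b : ℂ) :
    Complex.normSq (a + b) = Complex.normSq a + Complex.normSq b
      + 2 * ((starRingEnd ℂ) a * b).re := by
  simp [Complex.normSq_apply, Complex.mul_re, Complex.add_re, Complex.add_im]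
  ring

lemma normSq_sub' (a b : ℂ) :
    Complex.normSq (a - b) = Complex.normSq a + Complex.normSq b
      - 2 * ((starRingEnd ℂ) a * b).re := by
  simp [Complex.normSq_apply, Complex.mul_re, Complex.sub_re, Complex.sub_im]
  ring

lemma fro_add (A B : Matrix m k ℂ) : fro (A + B) = fro A + fro B + 2 * iprod A B := by
  unfold fro iprod
  have : ∀ i : m, ∑ j, Complex.normSq ((A + B) i j)
      = ∑ j, (Complex.normSq (A i j) + Complex.normSq (B i j)
        + 2 * ((starRingEnd ℂ) (A i j) * B i j).re) := by
    intro i; exact Finset.sum_congr rfl fun j _ => by rw [Matrix.add_apply, normSq_add']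
  rw [Finset.sum_congr rfl fun i _ => this i]
  simp only [Finset.sum_add_distrib, ← Finset.mul_sum]

lemma fro_sub (A B : Matrix m k ℂ) : fro (A - B) = fro A + fro B - 2 * iprod A B := by
  unfold fro iprod
  have : ∀ i : m, ∑ j, Complex.normSq ((A - B) i j)
      = ∑ j, (Complex.normSq (A i j) + Complex.normSq (B i j)
        - 2 * ((starRingEnd ℂ) (A i j) * B i j).re) := by
    intro i; exact Finset.sum_congr rfl fun j _ => by rw [Matrix.sub_apply, normSq_sub']
  rw [Finset.sum_congr rfl fun i _ => this i]
  simp only [Finset.sum_sub_distrib, Finset.sum_add_distrib, ← Finset.mul_sum]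

lemma fro_conjTranspose (M : Matrix m k ℂ) : fro Mᴴ = fro M := by
  unfold fro
  rw [Finset.sum_comm]
  exact Finset.sum_congr rfl fun i _ => Finset.sum_congr rfl fun j _ => by
    rw [Matrix.conjTranspose_apply, Complex.star_def, Complex.normSq_conj]

lemma fro_fromBlocks {l p : Type*} [Fintype l] [Fintype p]
    (A : Matrix m k ℂ) (B : Matrix m p ℂ) (C : Matrix l k ℂ) (D : Matrix l p ℂ) :
    fro (Matrix.fromBlocks A B C D) = fro A + fro B + fro C + fro D := by
  unfold fro
  simp only [Fintype.sum_sum_type, Matrix.fromBlocks_apply₁₁, Matrix.fromBlocks_apply₁₂,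
    Matrix.fromBlocks_apply₂₁, Matrix.fromBlocks_apply₂₂, Finset.sum_add_distrib]
  ring

lemma fro_submatrix_equiv {m' k' : Type*} [Fintype m'] [Fintype k']
    (M : Matrix m k ℂ) (e : m' ≃ m) (f : k' ≃ k) :
    fro (M.submatrix e f) = fro M := by
  unfold fro
  rw [← Equiv.sum_comp e (fun i => ∑ j, Complex.normSq (M i j))]
  exact Finset.sum_congr rfl fun i _ =>
    Equiv.sum_comp f (fun j => Complex.normSq (M (e i) j))

lemma frobNorm_eq' (M : Matrix m m ℂ) :
    Real.sqrt ((Matrix.trace (Mᴴ * M)).re) = Real.sqrt (fro M) := by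
  rw [fro_eq_trace]

lemma eval_charpoly [DecidableEq m] (M : Matrix m m ℂ) (z : ℂ) :
    (Matrix.charpoly M).eval z = (z • (1 : Matrix m m ℂ) - M).det := by
  rw [Matrix.charpoly, ← Polynomial.coe_evalRingHom, RingHom.map_det]
  congr 1
  ext i j
  by_cases h : i = j
  · subst h
    simp [Matrix.charmatrix_apply_eq, Matrix.one_apply_eq]
  · simp [Matrix.charmatrix_apply_ne _ _ _ h, Matrix.one_apply_ne h]

lemma charpoly_mul_comm_aux [DecidableEq m] [DecidableEq k]
    (A : Matrix m k ℂ) (B : Matrix k m ℂ) :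
    X ^ (Fintype.card k) * Matrix.charpoly (A * B)
      = X ^ (Fintype.card m) * Matrix.charpoly (B * A) := by
  apply Polynomial.eq_of_infinite_eval_eq
  have hinf : ({(0 : ℂ)}ᶜ : Set ℂ).Infinite := (Set.finite_singleton 0).infinite_compl
  refine hinf.mono fun z hz => ?_
  have hz0 : z ≠ 0 := by simpa using hz
  simp only [Set.mem_setOf_eq, Polynomial.eval_mul, Polynomial.eval_pow, Polynomial.eval_X,
    eval_charpoly]
  have h1 : z • (1 : Matrix m m ℂ) - A * B = z • ((1 : Matrix m m ℂ) - (z⁻¹ • A) * B) := by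
    rw [smul_sub, Matrix.smul_mul, smul_smul, mul_inv_cancel₀ hz0, one_smul]
  have h2 : (1 : Matrix k k ℂ) - B * (z⁻¹ • A) = z⁻¹ • (z • (1 : Matrix k k ℂ) - B * A) := by
    rw [smul_sub, smul_smul, inv_mul_cancel₀ hz0, one_smul, Matrix.mul_smul]
  calc z ^ Fintype.card k * (z • (1 : Matrix m m ℂ) - A * B).det
      = z ^ Fintype.card k * (z • ((1 : Matrix m m ℂ) - (z⁻¹ • A) * B)).det := by rw [h1]
    _ = z ^ Fintype.card k * (z ^ Fintype.card m
          * ((1 : Matrix m m ℂ) - (z⁻¹ • A) * B).det) := by rw [Matrix.det_smul]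
    _ = z ^ Fintype.card k * (z ^ Fintype.card m
          * ((1 : Matrix k k ℂ) - B * (z⁻¹ • A)).det) := by rw [Matrix.det_one_sub_mul_comm]
    _ = z ^ Fintype.card k * (z ^ Fintype.card m
          * ((z⁻¹) ^ Fintype.card k * (z • (1 : Matrix k k ℂ) - B * A).det)) := by
        rw [h2, Matrix.det_smul]
    _ = z ^ Fintype.card m * (z • (1 : Matrix k k ℂ) - B * A).det := by
        rw [inv_pow]
        field_simp
  
lemma charpoly_unitary_conj [DecidableEq m] {U : Matrix m m ℂ} (hU : star U * U = 1)
    (M : Matrix m m ℂ) : (star U * M * U).charpoly = M.charpoly := by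
  have h := charpoly_mul_comm_aux (star U * M) U
  have h2 : U * (star U * M) = M := by
    rw [← Matrix.mul_assoc, mul_eq_one_comm.mp hU, Matrix.one_mul]
  rw [h2] at h
  exact mul_left_cancel₀ (pow_ne_zero _ Polynomial.X_ne_zero) h

/-- Sum of `normSq` of the roots. -/
noncomputable def sumSq (p : Polynomial ℂ) : ℝ := (p.roots.map Complex.normSq).sum

lemma sumSq_mul {p q : Polynomial ℂ} (hp : p ≠ 0) (hq : q ≠ 0) :
    sumSq (p * q) = sumSq p + sumSq q := by
  unfold sumSq
  rw [Polynomial.roots_mul (mul_ne_zero hp hq), Multiset.map_add, Multiset.sum_add]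

lemma sumSq_X_sub_C (a : ℂ) : sumSq (X - C a) = Complex.normSq a := by
  unfold sumSq
  rw [Polynomial.roots_X_sub_C]
  simp

lemma sumSq_X_pow_mul {p : Polynomial ℂ} (hp : p ≠ 0) (j : ℕ) :
    sumSq (X ^ j * p) = sumSq p := by
  have hX : (X : Polynomial ℂ) ^ j ≠ 0 := pow_ne_zero _ Polynomial.X_ne_zero
  rw [sumSq_mul hX hp]
  have : sumSq ((X : Polynomial ℂ) ^ j) = 0 := by
    unfold sumSq
    rw [Polynomial.roots_pow, Polynomial.roots_X]
    simp [Multiset.nsmul_singleton]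
  rw [this, zero_add]

lemma step {p : ℕ} (M : Matrix (Fin (p + 1)) (Fin (p + 1)) ℂ) :
    ∃ (lam : ℂ) (M' : Matrix (Fin p) (Fin p) ℂ) (w : Matrix (Fin 1) (Fin p) ℂ),
      Matrix.charpoly M = Matrix.charpoly M' * (X - C lam) ∧
      fro M = Complex.normSq lam + fro w + fro M' ∧
      (Mᴴ * M = M * Mᴴ → w = 0 ∧ M'ᴴ * M' = M' * M'ᴴ) := by
  classical
  -- an eigenvalue and eigenvector
  have hdeg : (Matrix.charpoly M).degree = ((p + 1 : ℕ) : WithBot ℕ) := by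
    rw [Matrix.charpoly_degree_eq_dim]; simp
  obtain ⟨lam, hlam⟩ := Complex.exists_root (f := Matrix.charpoly M)
    (by rw [hdeg]; exact_mod_cast Nat.succ_pos p)
  have hdet : (lam • (1 : Matrix (Fin (p + 1)) (Fin (p + 1)) ℂ) - M).det = 0 := by
    rw [← eval_charpoly]; exact hlam
  obtain ⟨v, hv0, hv⟩ := (Matrix.exists_mulVec_eq_zero_iff).mpr hdet
  have hMv : M *ᵥ v = lam • v := by
    rw [Matrix.sub_mulVec, sub_eq_zero] at hv
    rw [← hv, Matrix.smul_mulVec, Matrix.one_mulVec]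
  -- normalized eigenvector, as an element of Euclidean space
  set E := EuclideanSpace ℂ (Fin (p + 1)) with hE
  set v' : E := WithLp.toLp 2 v with hv'
  have hvne : v' ≠ 0 := by rw [hv']; exact fun h => hv0 (congrArg WithLp.ofLp h)
  set c : ℂ := (‖v'‖ : ℂ)⁻¹ with hc
  set u : E := c • v' with hu
  have hnu : ‖u‖ = 1 := by
    rw [hu, norm_smul, hc, norm_inv, Complex.norm_real, norm_norm,
      inv_mul_cancel₀ (norm_ne_zero_iff.mpr hvne)]
  have hMu : M *ᵥ (u : Fin (p + 1) → ℂ) = lam • (u : Fin (p + 1) → ℂ) := by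
    show M *ᵥ (c • v') = lam • (c • v')
    rw [Matrix.mulVec_smul, hMv, smul_comm]
  -- orthonormal basis whose last element is `u`
  have horth : Orthonormal ℂ (Set.restrict {Fin.last p} (fun _ : Fin (p + 1) => u)) := by
    constructor
    · intro i; exact hnu
    · intro i j hij
      exact absurd (Subtype.ext ((Set.mem_singleton_iff.mp i.2).trans
        (Set.mem_singleton_iff.mp j.2).symm)) hij
  obtain ⟨b, hb⟩ := Orthonormal.exists_orthonormalBasis_extension_of_card_eq
    (𝕜 := ℂ)
    (by show Module.finrank ℂ (EuclideanSpace ℂ (Fin (p + 1))) = Fintype.card (Fin (p + 1))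
        simp [finrank_euclideanSpace_fin]) horth
  have hblast : b (Fin.last p) = u := hb _ (Set.mem_singleton _)
  -- the unitary with columns `b j`
  set U : Matrix (Fin (p + 1)) (Fin (p + 1)) ℂ := Matrix.of (fun i j => b j i) with hUdef
  have hinner : ∀ j k', ∑ i, (starRingEnd ℂ) ((b j) i) * (b k') i
      = if j = k' then 1 else 0 := by
    intro j k'
    have h := orthonormal_iff_ite.mp b.orthonormal j k'
    rw [← h, PiLp.inner_apply]
    simp [RCLike.inner_apply, mul_comm]
  have hU1 : star U * U = 1 := by
    ext j k'
    rw [Matrix.mul_apply, Matrix.one_apply]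
    calc ∑ i, (star U) j i * U i k' = ∑ i, (starRingEnd ℂ) ((b j) i) * (b k') i := by
          refine Finset.sum_congr rfl fun i _ => ?_
          simp [hUdef, Matrix.star_apply, Complex.star_def]
      _ = if j = k' then 1 else 0 := hinner j k'
  have hU2 : U * star U = 1 := mul_eq_one_comm.mp hU1
  have hU1' : Uᴴ * U = 1 := by rw [← Matrix.star_eq_conjTranspose]; exact hU1
  have hU2' : U * Uᴴ = 1 := by rw [← Matrix.star_eq_conjTranspose]; exact hU2
  have e1 : (star U * M * U)ᴴ * (star U * M * U) = star U * (Mᴴ * (M * U)) := by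
    simp only [Matrix.conjTranspose_mul, Matrix.star_eq_conjTranspose,
      Matrix.conjTranspose_conjTranspose, Matrix.mul_assoc]
    rw [← Matrix.mul_assoc U Uᴴ (M * U), hU2', Matrix.one_mul]
  have e2 : (star U * M * U) * (star U * M * U)ᴴ = star U * (M * (Mᴴ * U)) := by
    simp only [Matrix.conjTranspose_mul, Matrix.star_eq_conjTranspose,
      Matrix.conjTranspose_conjTranspose, Matrix.mul_assoc]
    rw [← Matrix.mul_assoc U Uᴴ (Mᴴ * U), hU2', Matrix.one_mul]
  have hfroN : fro (star U * M * U) = fro M := by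
    rw [← fro_eq_trace, ← fro_eq_trace, e1]
    have htr : Matrix.trace (star U * (Mᴴ * (M * U))) = Matrix.trace (Mᴴ * M) := by
      rw [Matrix.trace_mul_comm, Matrix.mul_assoc, Matrix.mul_assoc, hU2, Matrix.mul_one]
    rw [htr]
  -- the last column of the conjugated matrix
  have hucol : ∀ i, (star U * M * U) i (Fin.last p)
      = lam * (if i = Fin.last p then 1 else 0) := by
    intro i
    rw [Matrix.mul_assoc, Matrix.mul_apply]
    have h2 : ∀ k', (M * U) k' (Fin.last p) = lam * (b (Fin.last p)) k' := by
      intro k'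
      rw [Matrix.mul_apply]
      have hcol : ∀ j, U j (Fin.last p) = (b (Fin.last p)) j := by
        intro j; rw [hUdef]; rfl
      calc ∑ j, M k' j * U j (Fin.last p)
          = ∑ j, M k' j * (u : Fin (p + 1) → ℂ) j := by
            refine Finset.sum_congr rfl fun j _ => ?_
            rw [hcol j, hblast]
        _ = (M *ᵥ (u : Fin (p + 1) → ℂ)) k' := rfl
        _ = lam * (b (Fin.last p)) k' := by
            rw [hMu, hblast]; rfl
    calc ∑ k', (star U) i k' * (M * U) k' (Fin.last p)
        = lam * ∑ k', (starRingEnd ℂ) ((b i) k') * (b (Fin.last p)) k' := by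
          rw [Finset.mul_sum]
          refine Finset.sum_congr rfl fun k' _ => ?_
          rw [h2 k', Matrix.star_apply, hUdef]
          show (starRingEnd ℂ) ((b i) k') * (lam * (b (Fin.last p)) k') = _
          ring
      _ = lam * (if i = Fin.last p then 1 else 0) := by rw [hinner i (Fin.last p)]
  -- reindex to a block structure
  set e : Fin p ⊕ Fin 1 ≃ Fin (p + 1) := finSumFinEquiv with he
  set N' : Matrix (Fin p ⊕ Fin 1) (Fin p ⊕ Fin 1) ℂ
    := (star U * M * U).submatrix e e with hN'
  have helast : ∀ j : Fin 1, e (Sum.inr j) = Fin.last p := by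
    intro j
    apply Fin.ext
    have : (j : ℕ) = 0 := by omega
    simp [he, finSumFinEquiv, this, Fin.last]
  have helin : ∀ i : Fin p, e (Sum.inl i) ≠ Fin.last p := by
    intro i h
    have h1 : (e (Sum.inl i) : ℕ) = (i : ℕ) := by simp [he]
    have h2 := i.isLt
    rw [h] at h1
    simp [Fin.last] at h1
    omega
  set lamM : Matrix (Fin 1) (Fin 1) ℂ := Matrix.of (fun _ _ => lam) with hlamM
  set A' := N'.toBlocks₁₁ with hA'
  set W := N'.toBlocks₂₁ with hW
  have h12 : N'.toBlocks₁₂ = 0 := by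
    ext i j
    show N' (Sum.inl i) (Sum.inr j) = 0
    rw [hN', Matrix.submatrix_apply, helast j, hucol]
    simp [helin i]
  have h22 : N'.toBlocks₂₂ = lamM := by
    ext i j
    show N' (Sum.inr i) (Sum.inr j) = lam
    rw [hN', Matrix.submatrix_apply, helast j, hucol, helast i]
    simp
  have hsplit : N' = Matrix.fromBlocks A' 0 W lamM := by
    rw [hA', hW, ← h12, ← h22]
    exact (Matrix.fromBlocks_toBlocks N').symm
  have hcharlamM : lamM.charpoly = X - C lam := by
    rw [Matrix.charpoly, Matrix.det_fin_one, Matrix.charmatrix_apply_eq]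
    simp [hlamM]
  have hcharN' : N'.charpoly = (star U * M * U).charpoly := by
    rw [hN']
    have hre : (star U * M * U).submatrix ⇑e ⇑e
        = Matrix.reindex e.symm e.symm (star U * M * U) := by
      rw [Matrix.reindex_apply, Equiv.symm_symm]
    rw [hre, Matrix.charpoly_reindex]
  refine ⟨lam, A', W, ?_, ?_, ?_⟩
  · rw [← charpoly_unitary_conj hU1 M, ← hcharN', hsplit,
      Matrix.charpoly_fromBlocks_zero₁₂, hcharlamM]
  · rw [← hfroN]
    have h3 : fro (star U * M * U) = fro N' := (fro_submatrix_equiv _ e e).symm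
    rw [h3, hsplit, fro_fromBlocks]
    have hz : fro (0 : Matrix (Fin p) (Fin 1) ℂ) = 0 := by simp [fro]
    have hl : fro lamM = Complex.normSq lam := by simp [fro, hlamM]
    rw [hz, hl]; ring
  · intro hMn
    have hN'n : N'ᴴ * N' = N' * N'ᴴ := by
      calc N'ᴴ * N' = ((star U * M * U)ᴴ * (star U * M * U)).submatrix e e := by
            rw [hN', Matrix.conjTranspose_submatrix, Matrix.submatrix_mul_equiv]
        _ = ((star U * M * U) * (star U * M * U)ᴴ).submatrix e e := by
            rw [e1, e2, ← Matrix.mul_assoc Mᴴ M U, hMn, Matrix.mul_assoc]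
        _ = N' * N'ᴴ := by
            rw [hN', Matrix.conjTranspose_submatrix, Matrix.submatrix_mul_equiv]
    rw [hsplit, Matrix.fromBlocks_conjTranspose, Matrix.fromBlocks_multiply,
      Matrix.fromBlocks_multiply] at hN'n
    have h22' := congrArg Matrix.toBlocks₂₂ hN'n
    simp only [Matrix.toBlocks_fromBlocks₂₂, Matrix.conjTranspose_zero, Matrix.zero_mul,
      Matrix.mul_zero, add_zero, zero_add] at h22'
    have hlc : lamMᴴ * lamM = lamM * lamMᴴ := by
      ext i j
      simp [hlamM, Matrix.mul_apply, Matrix.conjTranspose_apply]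
      ring
    rw [hlc] at h22'
    have hWW : W * Wᴴ = 0 := by
      have h0 : W * Wᴴ + lamM * lamMᴴ = 0 + lamM * lamMᴴ := by rw [zero_add, ← h22']
      exact add_right_cancel h0
    have hW0 : W = 0 := by
      have h00 : (W * Wᴴ) 0 0 = 0 := by rw [hWW]; rfl
      rw [Matrix.mul_apply] at h00
      have hsum : ∑ j, Complex.normSq (W 0 j) = 0 := by
        have h1 : ∑ j, W 0 j * Wᴴ j 0 = ∑ j, (Complex.normSq (W 0 j) : ℂ) := by
          refine Finset.sum_congr rfl fun j _ => ?_
          rw [Matrix.conjTranspose_apply, Complex.star_def, Complex.mul_conj]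
        rw [h1] at h00
        exact_mod_cast h00
      ext i j
      have hi : i = 0 := Subsingleton.elim i 0
      subst hi
      have hj := (Finset.sum_eq_zero_iff_of_nonneg
        (fun j _ => Complex.normSq_nonneg (W 0 j))).mp hsum j (Finset.mem_univ j)
      simpa using Complex.normSq_eq_zero.mp hj
    refine ⟨hW0, ?_⟩
    have h11' := congrArg Matrix.toBlocks₁₁ hN'n
    simp only [Matrix.toBlocks_fromBlocks₁₁, Matrix.conjTranspose_zero, Matrix.zero_mul,
      Matrix.mul_zero, add_zero, zero_add] at h11'
    rw [hW0] at h11'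
    simpa using h11'

lemma schur_le : ∀ (p : ℕ) (M : Matrix (Fin p) (Fin p) ℂ), sumSq M.charpoly ≤ fro M := by
  intro p
  induction p with
  | zero =>
    intro M
    have hr : M.charpoly.roots = 0 := by
      have h1 := Polynomial.card_roots' M.charpoly
      rw [Matrix.charpoly_natDegree_eq_dim] at h1
      simp only [Fintype.card_fin, Nat.le_zero] at h1
      exact Multiset.card_eq_zero.mp h1
    have : sumSq M.charpoly = 0 := by rw [sumSq, hr]; simp
    rw [this]
    exact fro_nonneg M
  | succ q ih =>
    intro M
    obtain ⟨lam, M', w, hchar, hfro, _⟩ := step M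
    have hM'ne : M'.charpoly ≠ 0 := (Matrix.charpoly_monic M').ne_zero
    have hs : sumSq M.charpoly = sumSq M'.charpoly + Complex.normSq lam := by
      rw [hchar, sumSq_mul hM'ne (Polynomial.X_sub_C_ne_zero lam), sumSq_X_sub_C]
    have h1 := ih M'
    have h2 := fro_nonneg w
    rw [hs, hfro]
    linarith

lemma schur_eq : ∀ (p : ℕ) (M : Matrix (Fin p) (Fin p) ℂ),
    Mᴴ * M = M * Mᴴ → sumSq M.charpoly = fro M := by
  intro p
  induction p with
  | zero =>
    intro M _
    have hr : M.charpoly.roots = 0 := by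
      have h1 := Polynomial.card_roots' M.charpoly
      rw [Matrix.charpoly_natDegree_eq_dim] at h1
      simp only [Fintype.card_fin, Nat.le_zero] at h1
      exact Multiset.card_eq_zero.mp h1
    have h2 : sumSq M.charpoly = 0 := by rw [sumSq, hr]; simp
    have h3 : fro M = 0 := by simp [fro]
    rw [h2, h3]
  | succ q ih =>
    intro M hM
    obtain ⟨lam, M', w, hchar, hfro, hnor⟩ := step M
    obtain ⟨hw0, hM'⟩ := hnor hM
    have hM'ne : M'.charpoly ≠ 0 := (Matrix.charpoly_monic M').ne_zero
    have hs : sumSq M.charpoly = sumSq M'.charpoly + Complex.normSq lam := by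
      rw [hchar, sumSq_mul hM'ne (Polynomial.X_sub_C_ne_zero lam), sumSq_X_sub_C]
    have hfw : fro w = 0 := by rw [hw0]; simp [fro]
    rw [hs, hfro, ih M' hM', hfw]
    ring

lemma schur_le' {ι : Type*} [Fintype ι] [DecidableEq ι] (M : Matrix ι ι ℂ) :
    sumSq M.charpoly ≤ fro M := by
  obtain e := Fintype.equivFin ι
  have h1 : (Matrix.reindex e e M).charpoly = M.charpoly := Matrix.charpoly_reindex e M
  have h2 : fro (Matrix.reindex e e M) = fro M := by
    rw [Matrix.reindex_apply]
    exact fro_submatrix_equiv M e.symm e.symm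
  rw [← h1, ← h2]
  exact schur_le _ _

lemma schur_eq' {ι : Type*} [Fintype ι] [DecidableEq ι] (M : Matrix ι ι ℂ)
    (hM : Mᴴ * M = M * Mᴴ) : sumSq M.charpoly = fro M := by
  obtain e := Fintype.equivFin ι
  have h1 : (Matrix.reindex e e M).charpoly = M.charpoly := Matrix.charpoly_reindex e M
  have h2 : fro (Matrix.reindex e e M) = fro M := by
    rw [Matrix.reindex_apply]
    exact fro_submatrix_equiv M e.symm e.symm
  have h3 : (Matrix.reindex e e M)ᴴ * (Matrix.reindex e e M)
      = (Matrix.reindex e e M) * (Matrix.reindex e e M)ᴴ := by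
    rw [Matrix.reindex_apply, Matrix.conjTranspose_submatrix, Matrix.submatrix_mul_equiv,
      Matrix.submatrix_mul_equiv, hM]
  rw [← h1, ← h2]
  exact schur_eq _ _ h3

lemma posSemidef_fromBlocks_diag {ι κ : Type*} [Fintype ι] [Fintype κ]
    {P : Matrix ι ι ℂ} {Q : Matrix κ κ ℂ} (hP : P.PosSemidef) (hQ : Q.PosSemidef) :
    (Matrix.fromBlocks P 0 0 Q).PosSemidef := by
  refine Matrix.PosSemidef.of_dotProduct_mulVec_nonneg ?_ ?_
  · show (Matrix.fromBlocks P 0 0 Q)ᴴ = _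
    simp [Matrix.fromBlocks_conjTranspose, hP.1.eq, hQ.1.eq]
  · intro x
    have hx : (Matrix.fromBlocks P 0 0 Q) *ᵥ x
        = Sum.elim (P *ᵥ (x ∘ Sum.inl)) (Q *ᵥ (x ∘ Sum.inr)) := by
      rw [Matrix.fromBlocks_mulVec]
      simp
    rw [hx]
    have hsplit : dotProduct (star x) (Sum.elim (P *ᵥ (x ∘ Sum.inl)) (Q *ᵥ (x ∘ Sum.inr)))
        = dotProduct (star (x ∘ Sum.inl)) (P *ᵥ (x ∘ Sum.inl))
          + dotProduct (star (x ∘ Sum.inr)) (Q *ᵥ (x ∘ Sum.inr)) := by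
      simp [dotProduct, Fintype.sum_sum_type]
    rw [hsplit]
    exact add_nonneg (hP.dotProduct_mulVec_nonneg _) (hQ.dotProduct_mulVec_nonneg _)

lemma sqrtH_add_posSemidef {ι : Type*} [Fintype ι] [DecidableEq ι] {K H : Matrix ι ι ℂ}
    (hH : H.IsHermitian) (hK : K.PosSemidef) (hsq : K * K = H * H) :
    (K + H).PosSemidef := by
  set U : Matrix ι ι ℂ := (Matrix.IsHermitian.eigenvectorUnitary hH : Matrix ι ι ℂ) with hUdef
  have hU1 : star U * U = 1 := by
    exact Matrix.mem_unitaryGroup_iff'.mp (Matrix.IsHermitian.eigenvectorUnitary hH).2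
  have hU2 : U * star U = 1 := by
    exact Matrix.mem_unitaryGroup_iff.mp (Matrix.IsHermitian.eigenvectorUnitary hH).2
  set d := hH.eigenvalues with hd
  have hspec : H = U * Matrix.diagonal (RCLike.ofReal ∘ d) * star U := hH.spectral_theorem
  set Dabs : Matrix ι ι ℂ := Matrix.diagonal (RCLike.ofReal ∘ fun i => |d i|) with hDabs
  have hDabsPsd : Dabs.PosSemidef := by
    rw [hDabs]
    refine Matrix.posSemidef_diagonal_iff.mpr fun i => ?_
    exact RCLike.ofReal_nonneg.mpr (abs_nonneg _)
  have habs : (U * Dabs * star U).PosSemidef := by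
    rw [Matrix.star_eq_conjTranspose]
    exact hDabsPsd.mul_mul_conjTranspose_same U
  have hmul : ∀ D₁ D₂ : Matrix ι ι ℂ,
      (U * D₁ * star U) * (U * D₂ * star U) = U * (D₁ * D₂) * star U := by
    intro D₁ D₂
    calc (U * D₁ * star U) * (U * D₂ * star U)
        = U * (D₁ * ((star U * U) * (D₂ * star U))) := by
          simp only [Matrix.mul_assoc]
      _ = U * (D₁ * D₂) * star U := by
          rw [hU1, Matrix.one_mul]
          simp only [Matrix.mul_assoc]
  have hDD : Dabs * Dabs = Matrix.diagonal (RCLike.ofReal ∘ d) * Matrix.diagonal (RCLike.ofReal ∘ d) := by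
    rw [hDabs, Matrix.diagonal_mul_diagonal, Matrix.diagonal_mul_diagonal]
    ext i j
    rcases eq_or_ne i j with h | h
    · subst h
      simp only [Matrix.diagonal_apply_eq, Function.comp_apply]
      exact_mod_cast congrArg (RCLike.ofReal : ℝ → ℂ) (abs_mul_abs_self (d i))
    · simp [Matrix.diagonal_apply_ne _ h]
  have hsq2 : (U * Dabs * star U) * (U * Dabs * star U) = H * H := by
    rw [hmul, hDD, ← hmul, ← hspec]
  have hHH : (H * H).PosSemidef := by
    have h1 : H * H = Hᴴ * H := by rw [hH.eq]
    rw [h1]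
    exact Matrix.posSemidef_conjTranspose_mul_self H
  have hKeq : K = U * Dabs * star U := by
    have h1 := hK.eq_sqrt_of_sq_eq hHH (by rw [pow_two]; exact hsq)
    have h2 := habs.eq_sqrt_of_sq_eq hHH (by rw [pow_two]; exact hsq2)
    rw [h1, h2]
  have hsum : K + H = U * (Dabs + Matrix.diagonal (RCLike.ofReal ∘ d)) * star U := by
    rw [hKeq]
    nth_rewrite 1 [hspec]
    rw [Matrix.mul_add, Matrix.add_mul]
  rw [hsum, hDabs, Matrix.diagonal_add, Matrix.star_eq_conjTranspose]
  refine Matrix.PosSemidef.mul_mul_conjTranspose_same ?_ U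
  refine Matrix.posSemidef_diagonal_iff.mpr fun i => ?_
  show (0 : ℂ) ≤ RCLike.ofReal |d i| + RCLike.ofReal (d i)
  rw [← RCLike.ofReal_add]
  refine RCLike.ofReal_nonneg.mpr ?_
  have := neg_abs_le (d i)
  linarith

lemma special_psd {n : ℕ} (X : Matrix (Fin n) (Fin n) ℂ) :
    (Matrix.fromBlocks (matAbs Xᴴ) X Xᴴ (matAbs X)).PosSemidef := by
  have hPpsd : (matAbs Xᴴ).PosSemidef :=
    (Matrix.posSemidef_conjTranspose_mul_self Xᴴ).posSemidef_sqrt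
  have hQpsd : (matAbs X).PosSemidef :=
    (Matrix.posSemidef_conjTranspose_mul_self X).posSemidef_sqrt
  have hPsq : matAbs Xᴴ * matAbs Xᴴ = X * Xᴴ := by
    rw [matAbs_eq_sqrt]
    rw [(Matrix.posSemidef_conjTranspose_mul_self Xᴴ).sqrt_mul_self]
    simp
  have hQsq : matAbs X * matAbs X = Xᴴ * X := by
    rw [matAbs_eq_sqrt]
    exact (Matrix.posSemidef_conjTranspose_mul_self X).sqrt_mul_self
  have hH : (Matrix.fromBlocks 0 X Xᴴ 0).IsHermitian := by
    show (Matrix.fromBlocks (0 : Matrix (Fin n) (Fin n) ℂ) X Xᴴ 0)ᴴ = _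
    simp [Matrix.fromBlocks_conjTranspose]
  have hK := posSemidef_fromBlocks_diag hPpsd hQpsd
  have hsq : (Matrix.fromBlocks (matAbs Xᴴ) 0 0 (matAbs X))
        * (Matrix.fromBlocks (matAbs Xᴴ) 0 0 (matAbs X))
      = (Matrix.fromBlocks 0 X Xᴴ 0) * (Matrix.fromBlocks 0 X Xᴴ 0) := by
    rw [Matrix.fromBlocks_multiply, Matrix.fromBlocks_multiply]
    simp [hPsq, hQsq]
  have hadd := sqrtH_add_posSemidef hH hK hsq
  have heq : Matrix.fromBlocks (matAbs Xᴴ) 0 0 (matAbs X) + Matrix.fromBlocks 0 X Xᴴ 0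
      = Matrix.fromBlocks (matAbs Xᴴ) X Xᴴ (matAbs X) := by
    rw [Matrix.fromBlocks_add]
    simp
  rwa [heq] at hadd

lemma frobNorm_eq {m : Type*} [Fintype m] (M : Matrix m m ℂ) :
    frobNorm M = Real.sqrt (fro M) := by
  rw [frobNorm, fro_eq_trace]

end Stmt12Aux

open Stmt12Aux

/-- If `X` is nonnormal then `‖[[|Xᴴ|,X],[Xᴴ,|X|]]‖₂ > ‖|Xᴴ| + |X|‖₂`;
consequently, `‖[[A,X],[Xᴴ,B]]‖₂ ≤ ‖A+B‖₂` holds for all positive semidefinite completions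
if and only if `X` is normal. -/
theorem stmt12 {n : ℕ} (X : Matrix (Fin n) (Fin n) ℂ) :
    (¬ X * Xᴴ = Xᴴ * X →
      frobNorm (matAbs Xᴴ + matAbs X) <
        frobNorm (Matrix.fromBlocks (matAbs Xᴴ) X Xᴴ (matAbs X))) ∧
    ((∀ A B : Matrix (Fin n) (Fin n) ℂ, (Matrix.fromBlocks A X Xᴴ B).PosSemidef →
        frobNorm (Matrix.fromBlocks A X Xᴴ B) ≤ frobNorm (A + B)) ↔
      X * Xᴴ = Xᴴ * X) := by 
  have hPsq : matAbs Xᴴ * matAbs Xᴴ = X * Xᴴ := by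
    rw [matAbs_eq_sqrt]
    rw [(Matrix.posSemidef_conjTranspose_mul_self Xᴴ).sqrt_mul_self]
    simp
  have hQsq : matAbs X * matAbs X = Xᴴ * X := by
    rw [matAbs_eq_sqrt]
    exact (Matrix.posSemidef_conjTranspose_mul_self X).sqrt_mul_self
  have hPherm : (matAbs Xᴴ)ᴴ = matAbs Xᴴ :=
    (Matrix.posSemidef_conjTranspose_mul_self Xᴴ).posSemidef_sqrt.1.eq
  have hQherm : (matAbs X)ᴴ = matAbs X :=
    (Matrix.posSemidef_conjTranspose_mul_self X).posSemidef_sqrt.1.eq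
  have hfP : fro (matAbs Xᴴ) = fro X := by
    rw [← fro_eq_trace, ← fro_eq_trace X, hPherm, hPsq, Matrix.trace_mul_comm]
  have hfQ : fro (matAbs X) = fro X := by
    rw [← fro_eq_trace, ← fro_eq_trace X, hQherm, hQsq]
  have part1 : ¬ X * Xᴴ = Xᴴ * X →
      frobNorm (matAbs Xᴴ + matAbs X) <
        frobNorm (Matrix.fromBlocks (matAbs Xᴴ) X Xᴴ (matAbs X)) := by
    intro hnn
    have hne : matAbs Xᴴ ≠ matAbs X := by
      intro h
      exact hnn (by rw [← hPsq, ← hQsq, h])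
    have hpos : 0 < fro (matAbs Xᴴ - matAbs X) := by
      rcases lt_or_eq_of_le (fro_nonneg (matAbs Xᴴ - matAbs X)) with h | h
      · exact h
      · exact absurd (sub_eq_zero.mp (fro_eq_zero h.symm)) hne
    have hsub := fro_sub (matAbs Xᴴ) (matAbs X)
    have hadd := fro_add (matAbs Xᴴ) (matAbs X)
    rw [frobNorm_eq, frobNorm_eq]
    apply Real.sqrt_lt_sqrt (fro_nonneg _)
    rw [fro_fromBlocks, fro_conjTranspose, hadd]
    linarith
  refine ⟨part1, ⟨?_, ?_⟩⟩
  · intro hall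
    by_contra hnn
    exact absurd (hall (matAbs Xᴴ) (matAbs X) (special_psd X)) (not_le.mpr (part1 hnn))
  · intro hn A B hpsd
    have hRherm : (hpsd.sqrt)ᴴ = hpsd.sqrt := hpsd.posSemidef_sqrt.1.eq
    have hRR : hpsd.sqrtᴴ * hpsd.sqrt = Matrix.fromBlocks A X Xᴴ B := by
      rw [hRherm]; exact hpsd.sqrt_mul_self
    set R₁ : Matrix (Fin n ⊕ Fin n) (Fin n) ℂ := hpsd.sqrt.submatrix id Sum.inl with hR₁
    set R₂ : Matrix (Fin n ⊕ Fin n) (Fin n) ℂ := hpsd.sqrt.submatrix id Sum.inr with hR₂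
    have hentry : ∀ (f g : Fin n → Fin n ⊕ Fin n) (j l : Fin n),
        ((hpsd.sqrt.submatrix id f)ᴴ * (hpsd.sqrt.submatrix id g)) j l
          = (Matrix.fromBlocks A X Xᴴ B) (f j) (g l) := by
      intro f g j l
      have h0 : ((hpsd.sqrt.submatrix id f)ᴴ * (hpsd.sqrt.submatrix id g)) j l
          = (hpsd.sqrtᴴ * hpsd.sqrt) (f j) (g l) := by
        rw [Matrix.mul_apply, Matrix.mul_apply]
        refine Finset.sum_congr rfl fun i _ => ?_
        simp [Matrix.conjTranspose_apply, Matrix.submatrix_apply]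
      rw [h0, hRR]
    have hA : R₁ᴴ * R₁ = A := by
      rw [hR₁]; ext j l; rw [hentry]; rfl
    have hX : R₁ᴴ * R₂ = X := by
      rw [hR₁, hR₂]; ext j l; rw [hentry]; rfl
    have hB : R₂ᴴ * R₂ = B := by
      rw [hR₂]; ext j l; rw [hentry]; rfl
    have hAherm : Aᴴ = A := by rw [← hA]; simp [Matrix.conjTranspose_mul]
    -- eigenvalue transfer
    have hcomm := charpoly_mul_comm_aux R₁ᴴ R₂
    have hs1 : sumSq (R₁ᴴ * R₂).charpoly = sumSq (R₂ * R₁ᴴ).charpoly := by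
      have h1 := congrArg sumSq hcomm
      rwa [sumSq_X_pow_mul (Matrix.charpoly_monic _).ne_zero,
        sumSq_X_pow_mul (Matrix.charpoly_monic _).ne_zero] at h1
    have hXfro : fro X = sumSq (Matrix.charpoly X) := (schur_eq' X hn.symm).symm
    have hY := schur_le' (R₂ * R₁ᴴ)
    have htr : fro (R₂ * R₁ᴴ) = iprod A B := by
      rw [← fro_eq_trace, ← iprod_eq_trace]
      have h2 : (R₂ * R₁ᴴ)ᴴ * (R₂ * R₁ᴴ) = R₁ * ((R₂ᴴ * R₂) * R₁ᴴ) := by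
        simp only [Matrix.conjTranspose_mul, Matrix.conjTranspose_conjTranspose,
          Matrix.mul_assoc]
      rw [h2, hB, Matrix.trace_mul_comm, Matrix.mul_assoc, hA, Matrix.trace_mul_comm, hAherm]
    have hcX : Matrix.charpoly (R₁ᴴ * R₂) = Matrix.charpoly X := by rw [hX]
    have key : fro X ≤ iprod A B := by
      rw [hXfro]
      calc sumSq (Matrix.charpoly X) = sumSq ((R₂ * R₁ᴴ).charpoly) := by
            rw [← hcX]; exact hs1
        _ ≤ fro (R₂ * R₁ᴴ) := hY
        _ = iprod A B := htr
    rw [frobNorm_eq, frobNorm_eq]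
    apply Real.sqrt_le_sqrt
    rw [fro_fromBlocks, fro_conjTranspose, fro_add]
    linarith
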